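/- Let x ≥ 1 be a real number and define h : [1,∞) → ℝ by h(t) = (t − x)² + 1/t. Then h′(x + 1/(4x²)) < 0, and consequently any minimizer u of h over [1,∞) satisfies u > x + 1/(4x²). -/

import Mathlib

lemma stmt13_hasDerivAt (x : ℝ) (h : ℝ → ℝ)
    (hh : ∀ t, h t = (t - x) ^ 2 + 1 / t) (t : ℝ) (ht : t ≠ 0) :
    HasDerivAt h (2 * (t - x) - 1 / t ^ 2) t := by
  have hfun : h = fun s => (s - x) ^ 2 + s⁻¹ := by
    funext s; rw [hh s, one_div]
  rw [hfun]
  have h1 : HasDerivAt (fun s : ℝ => (s - x) ^ 2) (2 * (t - x)) t := by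
    have := (((hasDerivAt_id t).sub_const x).pow 2)
    exact this.congr_deriv (by simp [mul_comm])
  have h2 : HasDerivAt (fun s : ℝ => s⁻¹) (-(t ^ 2)⁻¹) t := by
    simpa using (hasDerivAt_inv ht)
  exact (h1.add h2).congr_deriv (by simp [one_div, sub_eq_add_neg])

/-- Remark 4.3: for `x ≥ 1` and `h(t) = (t − x)² + 1/t`, one has
`h′(x + 1/(4x²)) < 0`, so every minimizer of `h` over `[1,∞)` lies strictly to
the right of `x + 1/(4x²)`. -/
theorem stmt13 (x : ℝ) (hx : 1 ≤ x) (h : ℝ → ℝ)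
    (hh : ∀ t, h t = (t - x) ^ 2 + 1 / t) :
    deriv h (x + 1 / (4 * x ^ 2)) < 0 ∧
    ∀ u : ℝ, 1 ≤ u → (∀ t, 1 ≤ t → h u ≤ h t) → x + 1 / (4 * x ^ 2) < u := by
  have hx0 : (0 : ℝ) < x := lt_of_lt_of_le one_pos hx
  have hx2 : (0 : ℝ) < x ^ 2 := by positivity
  set t0 : ℝ := x + 1 / (4 * x ^ 2) with ht0
  have ht0pos : 0 < t0 := by positivity
  have hx3 : 1 ≤ x ^ 3 := by nlinarith
  have hx6 : 1 ≤ x ^ 6 := by nlinarith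
  have ht0x : x < t0 := by
    rw [ht0]
    have h4 : 0 < 1 / (4 * x ^ 2) := by positivity
    linarith
  -- derivative value at t0
  have hder : deriv h t0 = 2 * (t0 - x) - 1 / t0 ^ 2 :=
    (stmt13_hasDerivAt x h hh t0 (ne_of_gt ht0pos)).deriv
  have hderneg : deriv h t0 < 0 := by
    rw [hder]
    have ht0sq : t0 ^ 2 < 2 * x ^ 2 := by
      have h4 : t0 = (4 * x ^ 3 + 1) / (4 * x ^ 2) := by
        rw [ht0]; field_simp
      rw [h4, div_pow, div_lt_iff₀ (by positivity)]
      nlinarith [hx3, hx6]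
    have h1 : 2 * (t0 - x) = 1 / (2 * x ^ 2) := by
      rw [ht0]; ring
    rw [h1]
    rw [sub_neg, div_lt_div_iff₀ (by positivity) (by positivity)]
    linarith
  refine ⟨hderneg, ?_⟩
  intro u hu hmin
  by_contra hcon
  push_neg at hcon
  -- h is strictly decreasing on [1, s] where s = x + 9/(32 x^2)
  set s : ℝ := x + 9 / (32 * x ^ 2) with hs
  have hst0 : t0 < s := by
    have h4 : 1 / (4 * x ^ 2) < 9 / (32 * x ^ 2) := by
      rw [div_lt_div_iff₀ (by positivity) (by positivity)]
      nlinarith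
    rw [ht0, hs]
    linarith
  have hs1 : 1 ≤ s := by
    rw [hs]
    have h4 : 0 < 9 / (32 * x ^ 2) := by positivity
    linarith
  have hanti : StrictAntiOn h (Set.Icc 1 s) := by
    apply strictAntiOn_of_deriv_neg (convex_Icc 1 s)
    · have : ContinuousOn (fun t : ℝ => (t - x) ^ 2 + 1 / t) (Set.Icc 1 s) := by
        apply ContinuousOn.add
        · fun_prop
        · apply ContinuousOn.div continuousOn_const continuousOn_id
          intro t ht h0
          simp only [id_eq] at h0
          linarith [ht.1]
      convert this using 1
      funext t; exact hh t
    · intro t ht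
      rw [interior_Icc] at ht
      obtain ⟨ht1, hts⟩ := ht
      have htpos : 0 < t := lt_trans one_pos ht1
      rw [(stmt13_hasDerivAt x h hh t (ne_of_gt htpos)).deriv]
      have hts' : t < s := hts
      have hkey : 9 * s ^ 2 < 16 * x ^ 2 := by
        have h4 : s = (32 * x ^ 3 + 9) / (32 * x ^ 2) := by
          rw [hs]; field_simp
        rw [h4, div_pow, ← mul_div_assoc, div_lt_iff₀ (by positivity)]
        nlinarith [hx3, hx6]
      -- 2(t - x) < 2(s - x) = 9/(16 x^2) and 1/t^2 > 1/s^2 ≥ 9/(16x^2)... 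
      have h1 : 2 * (t - x) < 9 / (16 * x ^ 2) := by
        have : t - x < 9 / (32 * x ^ 2) := by rw [hs] at hts'; linarith
        have h2 : 2 * (9 / (32 * x ^ 2)) = 9 / (16 * x ^ 2) := by ring
        linarith
      have h2 : 9 / (16 * x ^ 2) ≤ 1 / s ^ 2 := by
        rw [div_le_div_iff₀ (by positivity) (by positivity)]
        linarith
      have h3 : 1 / s ^ 2 ≤ 1 / t ^ 2 := by
        apply div_le_div_of_nonneg_left one_pos.le (by positivity)
        have : 0 < s := lt_of_lt_of_le one_pos hs1
        nlinarith
      linarith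
  -- u ≤ t0 < s, both in Icc, contradiction with minimality at s
  have hus : u < s := lt_of_le_of_lt hcon hst0
  have h1 : h s < h u := hanti ⟨hu, hus.le⟩ ⟨hs1, le_refl s⟩ hus
  have h2 : h u ≤ h s := hmin s hs1
  linarith
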